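/- For every cardinal κ ≥ 2, the 2-partite digraph M_κ is homogeneous. -/

import Mathlib

/-- A 2-partite digraph `D = (X, Y, E)`: `X` and `Y` are disjoint sets covering the
vertex set, every edge goes between the two sides, and no two opposite edges exist. -/
structure TwoPartiteDigraph (V : Type*) where
  X : Set V
  Y : Set V
  cover : X ∪ Y = Set.univ
  disj : Disjoint X Y
  E : V → V → Prop
  mem_of_edge : ∀ u v, E u v → (u ∈ X ∧ v ∈ Y) ∨ (u ∈ Y ∧ v ∈ X)
  not_opposite : ∀ u v, E u v → ¬ E v u

namespace TwoPartiteDigraph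

variable {V V₁ V₂ : Type*}

/-- Out-neighbourhood (successors). -/
def Nplus (D : TwoPartiteDigraph V) (v : V) : Set V := {w | D.E v w}

/-- In-neighbourhood (predecessors). -/
def Nminus (D : TwoPartiteDigraph V) (v : V) : Set V := {w | D.E w v}

/-- Adjacency in the underlying undirected bipartite graph. -/
def Adj (D : TwoPartiteDigraph V) (u v : V) : Prop := D.E u v ∨ D.E v u

/-- `v^⊥`: the vertices on the other side not adjacent to `v`. -/
def perp (D : TwoPartiteDigraph V) (v : V) : Set V :=
  {w | ((v ∈ D.X ∧ w ∈ D.Y) ∨ (v ∈ D.Y ∧ w ∈ D.X)) ∧ ¬ D.Adj v w}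

/-- `D` is bipartite if all edges go from `X` to `Y`, or all from `Y` to `X`. -/
def Bipartite (D : TwoPartiteDigraph V) : Prop :=
  (∀ u v, D.E u v → u ∈ D.X) ∨ (∀ u v, D.E u v → u ∈ D.Y)

/-- `φ` is an isomorphism between the subdigraphs induced on `A` and on `φ '' A`,
respecting the bipartition. -/
def IsPartialIso (D : TwoPartiteDigraph V) (A : Set V) (φ : V → V) : Prop :=
  Set.InjOn φ A ∧ (∀ a ∈ A, (a ∈ D.X ↔ φ a ∈ D.X)) ∧ (∀ a ∈ A, (a ∈ D.Y ↔ φ a ∈ D.Y)) ∧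
  ∀ a ∈ A, ∀ b ∈ A, (D.E a b ↔ D.E (φ a) (φ b))

/-- A bipartition-preserving automorphism of `D`. -/
def IsAuto (D : TwoPartiteDigraph V) (α : Equiv.Perm V) : Prop :=
  (∀ v, v ∈ D.X ↔ α v ∈ D.X) ∧ (∀ v, v ∈ D.Y ↔ α v ∈ D.Y) ∧
  ∀ u v, D.E u v ↔ D.E (α u) (α v)

/-- `D` is homogeneous: every isomorphism between finite induced subdigraphs respecting
the bipartition extends to a bipartition-preserving automorphism of `D`. -/
def Homogeneous (D : TwoPartiteDigraph V) : Prop :=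
  ∀ A : Set V, A.Finite → ∀ φ : V → V, D.IsPartialIso A φ →
    ∃ α : Equiv.Perm V, D.IsAuto α ∧ ∀ a ∈ A, α a = φ a

/-- The underlying undirected bipartite graph is complete bipartite. -/
def CompleteBip (D : TwoPartiteDigraph V) : Prop := ∀ x ∈ D.X, ∀ y ∈ D.Y, D.Adj x y

/-- `D` is a generic 2-partite digraph. -/
def IsGeneric (D : TwoPartiteDigraph V) : Prop :=
  D.CompleteBip ∧
  ∀ AX BX : Set V, AX.Finite → BX.Finite → AX ⊆ D.X → BX ⊆ D.X → Disjoint AX BX →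
  ∀ AY BY : Set V, AY.Finite → BY.Finite → AY ⊆ D.Y → BY ⊆ D.Y → Disjoint AY BY →
    (∃ y ∈ D.Y, AX ⊆ D.Nplus y ∧ BX ⊆ D.Nminus y) ∧
    (∃ x ∈ D.X, AY ⊆ D.Nplus x ∧ BY ⊆ D.Nminus x)

/-- `D` is a generic orientation of a generic bipartite graph. -/
def IsGenericOrientation (D : TwoPartiteDigraph V) : Prop :=
  ∀ AX BX CX : Set V, AX.Finite → BX.Finite → CX.Finite →
    AX ⊆ D.X → BX ⊆ D.X → CX ⊆ D.X →
    Disjoint AX BX → Disjoint AX CX → Disjoint BX CX →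
  ∀ AY BY CY : Set V, AY.Finite → BY.Finite → CY.Finite →
    AY ⊆ D.Y → BY ⊆ D.Y → CY ⊆ D.Y →
    Disjoint AY BY → Disjoint AY CY → Disjoint BY CY →
    (∃ y ∈ D.Y, AX ⊆ D.Nplus y ∧ BX ⊆ D.Nminus y ∧ CX ⊆ D.perp y) ∧
    (∃ x ∈ D.X, AY ⊆ D.Nplus x ∧ BY ⊆ D.Nminus x ∧ CY ⊆ D.perp x)

/-- `D` is (a copy of) `M_κ` with the matching oriented from `X` to `Y`:
there is a bijection `m : X → Y` such that the edges from `X` to `Y` form the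
perfect matching `{(x, m x)}` and the edges from `Y` to `X` form its bipartite
complement. -/
def IsMFixed (D : TwoPartiteDigraph V) : Prop :=
  ∃ m : V → V, Set.BijOn m D.X D.Y ∧
    (∀ x ∈ D.X, ∀ y ∈ D.Y, (D.E x y ↔ y = m x)) ∧
    (∀ x ∈ D.X, ∀ y ∈ D.Y, (D.E y x ↔ y ≠ m x))

/-- `D` is (a copy of) `M_κ`: one of the two directed parts is a perfect matching and
the other is the bipartite complement of a perfect matching. -/
def IsM (D : TwoPartiteDigraph V) : Prop :=
  ∃ m : V → V, Set.BijOn m D.X D.Y ∧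
    ((∀ x ∈ D.X, ∀ y ∈ D.Y, (D.E x y ↔ y = m x) ∧ (D.E y x ↔ y ≠ m x)) ∨
     (∀ x ∈ D.X, ∀ y ∈ D.Y, (D.E y x ↔ y = m x) ∧ (D.E x y ↔ y ≠ m x)))

/-- Isomorphism of 2-partite digraphs respecting the bipartitions. -/
def Isomorphic (D₁ : TwoPartiteDigraph V₁) (D₂ : TwoPartiteDigraph V₂) : Prop :=
  ∃ e : V₁ ≃ V₂, (∀ v, v ∈ D₁.X ↔ e v ∈ D₂.X) ∧ (∀ v, v ∈ D₁.Y ↔ e v ∈ D₂.Y) ∧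
    ∀ u v, D₁.E u v ↔ D₂.E (e u) (e v)

/-- `φ` is an isomorphism of finite induced subgraphs of the underlying undirected
bipartite graph, respecting the bipartition. -/
def IsGraphPartialIso (D : TwoPartiteDigraph V) (A : Set V) (φ : V → V) : Prop :=
  Set.InjOn φ A ∧ (∀ a ∈ A, (a ∈ D.X ↔ φ a ∈ D.X)) ∧ (∀ a ∈ A, (a ∈ D.Y ↔ φ a ∈ D.Y)) ∧
  ∀ a ∈ A, ∀ b ∈ A, (D.Adj a b ↔ D.Adj (φ a) (φ b))

/-- The underlying undirected bipartite graph of `D` is homogeneous. -/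
def GraphHomogeneous (D : TwoPartiteDigraph V) : Prop :=
  ∀ A : Set V, A.Finite → ∀ φ : V → V, D.IsGraphPartialIso A φ →
    ∃ α : Equiv.Perm V, ((∀ v, v ∈ D.X ↔ α v ∈ D.X) ∧ (∀ v, v ∈ D.Y ↔ α v ∈ D.Y) ∧
      ∀ u v, D.Adj u v ↔ D.Adj (α u) (α v)) ∧ ∀ a ∈ A, α a = φ a

/-- The underlying undirected bipartite graph of `D` is generic. -/
def UnderlyingGeneric (D : TwoPartiteDigraph V) : Prop :=
  ∀ UX VX : Set V, UX.Finite → VX.Finite → UX ⊆ D.X → VX ⊆ D.X → Disjoint UX VX →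
  ∀ UY VY : Set V, UY.Finite → VY.Finite → UY ⊆ D.Y → VY ⊆ D.Y → Disjoint UY VY →
    (∃ y ∈ D.Y, (∀ u ∈ UX, D.Adj y u) ∧ ∀ v ∈ VX, ¬ D.Adj y v) ∧
    (∃ x ∈ D.X, (∀ u ∈ UY, D.Adj x u) ∧ ∀ v ∈ VY, ¬ D.Adj x v)

end TwoPartiteDigraph

open TwoPartiteDigraph

/-- For every cardinal `κ ≥ 2`, the 2-partite digraph `M_κ` is homogeneous. -/
theorem stmt_13 {V : Type*} (D : TwoPartiteDigraph V) (hM : D.IsMFixed)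
    (hκ : 2 ≤ Cardinal.mk D.X) : D.Homogeneous := by
  classical
  obtain ⟨m, hbij, he1, he2⟩ := hM
  intro A hA φ hpi
  obtain ⟨hinj, hX, hY, hE⟩ := hpi
  have hmY : ∀ x ∈ D.X, m x ∈ D.Y := hbij.mapsTo
  have minj : Set.InjOn m D.X := hbij.injOn
  have hXnY : ∀ v ∈ D.X, v ∉ D.Y := fun v hv => Set.disjoint_left.mp D.disj hv
  have hYnX : ∀ v ∈ D.Y, v ∉ D.X := fun v hv => Set.disjoint_right.mp D.disj hv
  have hcov : ∀ v : V, v ∉ D.X → v ∈ D.Y := by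
    intro v h
    have : v ∈ D.X ∪ D.Y := D.cover ▸ Set.mem_univ v
    exact this.resolve_left h
  have hcov' : ∀ v : V, v ∉ D.Y → v ∈ D.X := by
    intro v h
    have : v ∈ D.X ∪ D.Y := D.cover ▸ Set.mem_univ v
    exact this.resolve_right h
  -- no edges within one side
  have hnoXX : ∀ u ∈ D.X, ∀ v ∈ D.X, ¬ D.E u v := by
    intro u hu v hv h
    rcases D.mem_of_edge u v h with ⟨_, h2⟩ | ⟨h2, _⟩
    · exact hXnY v hv h2
    · exact hXnY u hu h2
  have hnoYY : ∀ u ∈ D.Y, ∀ v ∈ D.Y, ¬ D.E u v := by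
    intro u hu v hv h
    rcases D.mem_of_edge u v h with ⟨h2, _⟩ | ⟨_, h2⟩
    · exact hYnX u hu h2
    · exact hYnX v hv h2
  -- the equivalence X ≃ Y induced by the matching
  set e : ↥D.X ≃ ↥D.Y := Equiv.ofBijective (fun x => ⟨m x.1, hmY _ x.2⟩) (by
    constructor
    · intro a b hab
      exact Subtype.ext (minj a.2 b.2 (congrArg Subtype.val hab))
    · rintro ⟨y, hy⟩
      obtain ⟨x, hx, hxy⟩ := hbij.surjOn hy
      exact ⟨⟨x, hx⟩, Subtype.ext hxy⟩) with he_def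
  have heval : ∀ x : ↥D.X, ((e x : ↥D.Y) : V) = m x.1 := fun x => rfl
  -- the key compatibility of φ with the matching
  have K : ∀ a ∈ A, a ∈ D.X → ∀ b ∈ A, b ∈ D.Y → (b = m a ↔ φ b = m (φ a)) := by
    intro a haA haX b hbA hbY
    rw [← he1 a haX b hbY, hE a haA b hbA,
      he1 (φ a) ((hX a haA).mp haX) (φ b) ((hY b hbA).mp hbY)]
  -- the finite partial injection on X
  set S : Set ↥D.X := {x | x.1 ∈ A ∨ m x.1 ∈ A} with hS_def
  have hSfin : S.Finite := by
    have hsub : S ⊆ (fun x : ↥D.X => x.1) ⁻¹' A ∪ (fun x : ↥D.X => m x.1) ⁻¹' A :=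
      fun x hx => hx
    refine Set.Finite.subset (Set.Finite.union (hA.preimage ?_) (hA.preimage ?_)) hsub
    · exact Subtype.val_injective.injOn
    · intro x _ y _ hxy
      exact Subtype.ext (minj x.2 y.2 hxy)
  set f0 : ↥D.X → ↥D.X := fun x =>
    if h : x.1 ∈ A then ⟨φ x.1, (hX _ h).mp x.2⟩
    else if h2 : m x.1 ∈ A then e.symm ⟨φ (m x.1), (hY _ h2).mp (hmY _ x.2)⟩
    else x with hf0_def
  have hf0_pos : ∀ (x : ↥D.X) (h : x.1 ∈ A), f0 x = ⟨φ x.1, (hX _ h).mp x.2⟩ := by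
    intro x h; simp only [hf0_def, dif_pos h]
  have hf0_neg : ∀ (x : ↥D.X) (h : x.1 ∉ A) (h2 : m x.1 ∈ A),
      f0 x = e.symm ⟨φ (m x.1), (hY _ h2).mp (hmY _ x.2)⟩ := by
    intro x h h2; simp only [hf0_def, dif_neg h, dif_pos h2]
  have hf0inj : Set.InjOn f0 S := by
    intro x hx y hy hxy
    by_cases hxA : x.1 ∈ A <;> by_cases hyA : y.1 ∈ A
    · rw [hf0_pos x hxA, hf0_pos y hyA] at hxy
      exact Subtype.ext (hinj hxA hyA (congrArg Subtype.val hxy))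
    · have hyS : m y.1 ∈ A := hy.resolve_left hyA
      rw [hf0_pos x hxA, hf0_neg y hyA hyS] at hxy
      have h := congrArg (fun z : ↥D.X => ((e z : ↥D.Y) : V)) hxy
      simp only [Equiv.apply_symm_apply, heval] at h
      have h2 : m y.1 = m x.1 :=
        (K x.1 hxA x.2 (m y.1) hyS (hmY _ y.2)).mpr h.symm
      exact (Subtype.ext (minj y.2 x.2 h2)).symm
    · have hxS : m x.1 ∈ A := hx.resolve_left hxA
      rw [hf0_pos y hyA, hf0_neg x hxA hxS] at hxy
      have h := congrArg (fun z : ↥D.X => ((e z : ↥D.Y) : V)) hxy.symm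
      simp only [Equiv.apply_symm_apply, heval] at h
      have h2 : m x.1 = m y.1 :=
        (K y.1 hyA y.2 (m x.1) hxS (hmY _ x.2)).mpr h.symm
      exact Subtype.ext (minj x.2 y.2 h2)
    · have hxS : m x.1 ∈ A := hx.resolve_left hxA
      have hyS : m y.1 ∈ A := hy.resolve_left hyA
      rw [hf0_neg x hxA hxS, hf0_neg y hyA hyS] at hxy
      have h2 : φ (m x.1) = φ (m y.1) :=
        congrArg Subtype.val (e.symm.injective hxy)
      exact Subtype.ext (minj x.2 y.2 (hinj hxS hyS h2))
  -- extend it to a permutation σ of X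
  set F : ↥S ↪ ↥D.X :=
    ⟨fun s => f0 s.1, fun s t h => Subtype.ext (hf0inj s.2 t.2 h)⟩ with hF_def
  obtain ⟨σ, hσ⟩ : ∃ g : ↥D.X ≃ ↥D.X, ∀ x : ↥S, g x = F x := by
    rcases finite_or_infinite ↥D.X with h | h
    · exact Cardinal.extend_function_finite F ⟨Equiv.refl _⟩
    · refine Cardinal.extend_function_of_lt F ?_ ⟨Equiv.refl _⟩
      exact lt_of_lt_of_le hSfin.lt_aleph0 (Cardinal.infinite_iff.mp h)
  have hσS : ∀ (x : ↥D.X) (hx : x ∈ S), σ x = f0 x := fun x hx => hσ ⟨x, hx⟩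
  -- the permutation of Y conjugate to σ
  set τ : Equiv.Perm ↥D.Y := (e.symm.trans σ).trans e with hτ_def
  -- the global map and its inverse
  set αf : V → V := fun v =>
    if h : v ∈ D.X then (σ ⟨v, h⟩ : V) else (τ ⟨v, hcov v h⟩ : V) with hαf_def
  set gf : V → V := fun v =>
    if h : v ∈ D.X then (σ.symm ⟨v, h⟩ : V) else (τ.symm ⟨v, hcov v h⟩ : V) with hgf_def
  have hαfX : ∀ (v : V) (h : v ∈ D.X), αf v = (σ ⟨v, h⟩ : V) := by
    intro v h; simp only [hαf_def, dif_pos h]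
  have hαfY : ∀ (v : V) (h : v ∉ D.X), αf v = (τ ⟨v, hcov v h⟩ : V) := by
    intro v h; simp only [hαf_def, dif_neg h]
  have hgfX : ∀ (v : V) (h : v ∈ D.X), gf v = (σ.symm ⟨v, h⟩ : V) := by
    intro v h; simp only [hgf_def, dif_pos h]
  have hgfY : ∀ (v : V) (h : v ∉ D.X), gf v = (τ.symm ⟨v, hcov v h⟩ : V) := by
    intro v h; simp only [hgf_def, dif_neg h]
  have hli : Function.LeftInverse gf αf := by
    intro v
    by_cases h : v ∈ D.X
    · rw [hαfX v h, hgfX _ (σ ⟨v, h⟩).2]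
      have h1 : (⟨((σ ⟨v, h⟩ : ↥D.X) : V), (σ ⟨v, h⟩).2⟩ : ↥D.X) = σ ⟨v, h⟩ := rfl
      rw [h1, Equiv.symm_apply_apply]
    · rw [hαfY v h]
      have hmem : ((τ ⟨v, hcov v h⟩ : ↥D.Y) : V) ∉ D.X := hYnX _ (τ ⟨v, hcov v h⟩).2
      rw [hgfY _ hmem]
      have h1 : (⟨((τ ⟨v, hcov v h⟩ : ↥D.Y) : V), hcov _ hmem⟩ : ↥D.Y) = τ ⟨v, hcov v h⟩ :=
        rfl
      rw [h1, Equiv.symm_apply_apply]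
  have hri : Function.RightInverse gf αf := by
    intro v
    by_cases h : v ∈ D.X
    · rw [hgfX v h, hαfX _ (σ.symm ⟨v, h⟩).2]
      have h1 : (⟨((σ.symm ⟨v, h⟩ : ↥D.X) : V), (σ.symm ⟨v, h⟩).2⟩ : ↥D.X) = σ.symm ⟨v, h⟩ :=
        rfl
      rw [h1, Equiv.apply_symm_apply]
    · rw [hgfY v h]
      have hmem : ((τ.symm ⟨v, hcov v h⟩ : ↥D.Y) : V) ∉ D.X :=
        hYnX _ (τ.symm ⟨v, hcov v h⟩).2
      rw [hαfY _ hmem]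
      have h1 : (⟨((τ.symm ⟨v, hcov v h⟩ : ↥D.Y) : V), hcov _ hmem⟩ : ↥D.Y) =
          τ.symm ⟨v, hcov v h⟩ := rfl
      rw [h1, Equiv.apply_symm_apply]
  set α : Equiv.Perm V := ⟨αf, gf, hli, hri⟩ with hα_def
  have hαapp : ∀ v, α v = αf v := fun v => rfl
  have hainj : Function.Injective ⇑α := α.injective
  -- membership preservation
  have hmemX : ∀ v, v ∈ D.X ↔ α v ∈ D.X := by
    intro v
    constructor
    · intro h; rw [hαapp, hαfX v h]; exact (σ ⟨v, h⟩).2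
    · intro h
      by_contra hv
      rw [hαapp, hαfY v hv] at h
      exact hYnX _ (τ ⟨v, hcov v hv⟩).2 h
  have hmemY : ∀ v, v ∈ D.Y ↔ α v ∈ D.Y := by
    intro v
    constructor
    · intro h
      have hv : v ∉ D.X := hYnX v h
      rw [hαapp, hαfY v hv]; exact (τ ⟨v, hcov v hv⟩).2
    · intro h
      by_contra hv
      have hvX : v ∈ D.X := hcov' v hv
      exact hXnY _ ((hmemX v).mp hvX) h
  -- α commutes with the matching
  have hcomm : ∀ (x : V) (h : x ∈ D.X), α (m x) = m (α x) := by
    intro x h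
    have hmx : m x ∉ D.X := hYnX _ (hmY _ h)
    rw [hαapp, hαfY _ hmx, hαapp, hαfX x h]
    have h1 : e.symm (⟨m x, hcov _ hmx⟩ : ↥D.Y) = ⟨x, h⟩ := by
      rw [Equiv.symm_apply_eq]
      exact Subtype.ext rfl
    have h2 : ((τ ⟨m x, hcov _ hmx⟩ : ↥D.Y) : V) = ((e (σ (e.symm ⟨m x, hcov _ hmx⟩)) : ↥D.Y) : V) := by
      simp only [hτ_def, Equiv.trans_apply]
    rw [h2, h1, heval]
  -- edge preservation
  have hEiff : ∀ u v, D.E u v ↔ D.E (α u) (α v) := by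
    intro u v
    by_cases hu : u ∈ D.X
    · by_cases hv : v ∈ D.X
      · constructor
        · intro h; exact absurd h (hnoXX u hu v hv)
        · intro h; exact absurd h (hnoXX _ ((hmemX u).mp hu) _ ((hmemX v).mp hv))
      · have hvY := hcov v hv
        rw [he1 u hu v hvY, he1 (α u) ((hmemX u).mp hu) (α v) ((hmemY v).mp hvY),
          ← hcomm u hu]
        exact ⟨fun hh => by rw [hh], fun hh => hainj hh⟩
    · have huY := hcov u hu
      by_cases hv : v ∈ D.X
      · rw [he2 v hv u huY, he2 (α v) ((hmemX v).mp hv) (α u) ((hmemY u).mp huY),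
          ← hcomm v hv]
        constructor
        · intro hne heq; exact hne (hainj heq)
        · intro hne heq; exact hne (congrArg (⇑α) heq)
      · have hvY := hcov v hv
        constructor
        · intro h; exact absurd h (hnoYY u huY v hvY)
        · intro h; exact absurd h (hnoYY _ ((hmemY u).mp huY) _ ((hmemY v).mp hvY))
  -- α extends φ on A
  have hfix : ∀ a ∈ A, α a = φ a := by
    intro a ha
    by_cases h : a ∈ D.X
    · have hs : (⟨a, h⟩ : ↥D.X) ∈ S := Or.inl ha
      rw [hαapp, hαfX a h, hσS _ hs, hf0_pos ⟨a, h⟩ ha]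
    · have haY := hcov a h
      set x : ↥D.X := e.symm ⟨a, haY⟩ with hx_def
      have hmx : m x.1 = a := by
        have h1 : e x = ⟨a, haY⟩ := Equiv.apply_symm_apply e _
        have := congrArg Subtype.val h1
        rw [heval] at this
        exact this
      have hmxA : m x.1 ∈ A := by rw [hmx]; exact ha
      have hxS : x ∈ S := Or.inr hmxA
      rw [hαapp, hαfY a h]
      have hτa : ((τ ⟨a, hcov a h⟩ : ↥D.Y) : V) = ((e (σ x) : ↥D.Y) : V) := by
        simp only [hτ_def, Equiv.trans_apply]
        rfl
      rw [hτa, hσS x hxS, heval]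
      by_cases hxa : x.1 ∈ A
      · rw [hf0_pos x hxa]
        exact ((K x.1 hxa x.2 a ha haY).mp hmx.symm).symm
      · rw [hf0_neg x hxa hmxA]
        have h3 : ∀ z : ↥D.Y, m ((e.symm z : ↥D.X) : V) = (z : V) := by
          intro z; rw [← heval (e.symm z), Equiv.apply_symm_apply]
        rw [h3]
        show φ (m x.1) = φ a
        rw [hmx]
  exact ⟨α, ⟨hmemX, hmemY, hEiff⟩, hfix⟩
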